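/- arXiv:math/0406588 — 4 statements merged into one kernel-verified Lean document; each statement's English description precedes it below -/
import Mathlib

section
/- Let d be a positive integer. For all integers r_1, ..., r_d, if the product ∏_{ℓ=1}^{d} (1 - ℓX)^{r_ℓ} equals 1 in the unit group (ℤ[X]/(X^{d+1}))^×, then r_1 = r_2 = ... = r_d = 0. In other words, the elements 1 - X, 1 - 2X, ..., 1 - dX generate a free abelian subgroup of (ℤ[X]/(X^{d+1}))^× of rank d, with these elements as free generators. -/
/-- The truncated polynomial ring `ℤ[X]/(X^(d+1))`. -/
def TruncPoly (d : ℕ) : Type :=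
  Polynomial ℤ ⧸ Ideal.span ({Polynomial.X ^ (d + 1)} : Set (Polynomial ℤ))

noncomputable instance (d : ℕ) : CommRing (TruncPoly d) :=
  Ideal.Quotient.commRing _

/-- The residue class of `1 - ℓ·X` in `ℤ[X]/(X^(d+1))`. -/
noncomputable def oneSubMulX (d ℓ : ℕ) : TruncPoly d :=
  Ideal.Quotient.mk (Ideal.span ({Polynomial.X ^ (d + 1)} : Set (Polynomial ℤ)))
    (1 - (ℓ : Polynomial ℤ) * Polynomial.X)

open Polynomial Finset

/-- Auxiliary: `1 - ℓ·X` as an integer polynomial. -/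
noncomputable def vpoly (ℓ : ℕ) : Polynomial ℤ := 1 - (ℓ : Polynomial ℤ) * Polynomial.X

lemma derivative_finset_prod (s : Finset ℕ) (f : ℕ → Polynomial ℤ) :
    derivative (∏ ℓ ∈ s, f ℓ) = ∑ ℓ ∈ s, (∏ j ∈ s.erase ℓ, f j) * derivative (f ℓ) := by
  classical
  induction s using Finset.induction_on with
  | empty => simp
  | @insert i t hit ih =>
    rw [prod_insert hit, derivative_mul, ih, sum_insert hit, erase_insert hit, mul_sum]
    congr 1
    · exact mul_comm _ _
    refine sum_congr rfl fun j hjt => ?_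
    rw [t.erase_insert_of_ne (ne_of_mem_of_not_mem hjt hit).symm,
      prod_insert (mem_of_mem_erase.mt hit)]
    ring

lemma derivative_prod_pow_succ (s : Finset ℕ) (v : ℕ → Polynomial ℤ) (e : ℕ → ℕ) :
    derivative (∏ ℓ ∈ s, v ℓ ^ (e ℓ + 1)) =
      (∏ ℓ ∈ s, v ℓ ^ e ℓ) *
        ∑ ℓ ∈ s, C ((e ℓ : ℤ) + 1) * derivative (v ℓ) * ∏ j ∈ s.erase ℓ, v j := by
  classical
  rw [derivative_finset_prod, mul_sum]
  refine sum_congr rfl fun ℓ hℓ => ?_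
  rw [derivative_pow_succ]
  have h1 : ∏ j ∈ s.erase ℓ, v j ^ (e j + 1)
      = (∏ j ∈ s.erase ℓ, v j ^ e j) * ∏ j ∈ s.erase ℓ, v j := by
    rw [← prod_mul_distrib]; exact prod_congr rfl fun j _ => pow_succ _ _
  have h2 : ∏ j ∈ s, v j ^ e j = v ℓ ^ e ℓ * ∏ j ∈ s.erase ℓ, v j ^ e j :=
    (mul_prod_erase s _ hℓ).symm
  rw [h1, h2]
  ring

lemma derivative_vpoly (ℓ : ℕ) : derivative (vpoly ℓ) = C (-(ℓ : ℤ)) := by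
  simp [vpoly]

/-- Step 1: the multiplicative relation among the units yields a polynomial
congruence modulo `X^(d+1)` with nonnegative exponents. -/
theorem trunc_step1 (d : ℕ) (r : ℕ → ℤ)
    (u : ℕ → (TruncPoly d)ˣ)
    (hu : ∀ ℓ, (u ℓ : TruncPoly d) = oneSubMulX d ℓ)
    (h : ∏ ℓ ∈ Finset.Icc 1 d, u ℓ ^ r ℓ = 1) :
    (Polynomial.X : Polynomial ℤ) ^ (d+1) ∣
      (∏ ℓ ∈ Finset.Icc 1 d, vpoly ℓ ^ ((r ℓ).toNat + 1)) -
      (∏ ℓ ∈ Finset.Icc 1 d, vpoly ℓ ^ ((-r ℓ).toNat + 1)) := by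
  classical
  simp only [vpoly]
  set s := Finset.Icc 1 d with hs
  have hunits : ∏ ℓ ∈ s, u ℓ ^ (((r ℓ).toNat + 1 : ℕ) : ℤ)
      = ∏ ℓ ∈ s, u ℓ ^ (((-r ℓ).toNat + 1 : ℕ) : ℤ) := by
    calc ∏ ℓ ∈ s, u ℓ ^ (((r ℓ).toNat + 1 : ℕ) : ℤ)
        = ∏ ℓ ∈ s, (u ℓ ^ r ℓ * u ℓ ^ (((-r ℓ).toNat + 1 : ℕ) : ℤ)) := by
          refine Finset.prod_congr rfl fun ℓ _ => ?_
          rw [← zpow_add]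
          congr 1
          omega
      _ = (∏ ℓ ∈ s, u ℓ ^ r ℓ) * ∏ ℓ ∈ s, u ℓ ^ (((-r ℓ).toNat + 1 : ℕ) : ℤ) :=
          Finset.prod_mul_distrib
      _ = _ := by rw [h, one_mul]
  simp only [zpow_natCast] at hunits
  have hval := congrArg Units.val hunits
  have hcoe : ∀ (e : ℕ → ℕ), ((∏ ℓ ∈ s, u ℓ ^ e ℓ : (TruncPoly d)ˣ) : TruncPoly d)
      = Ideal.Quotient.mk (Ideal.span ({Polynomial.X ^ (d + 1)} : Set (Polynomial ℤ)))
          (∏ ℓ ∈ s, (1 - (ℓ : Polynomial ℤ) * Polynomial.X) ^ e ℓ) := by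
    intro e
    rw [Units.coe_prod, map_prod]
    refine Finset.prod_congr rfl fun ℓ _ => ?_
    rw [Units.val_pow_eq_pow_val, hu ℓ, map_pow]
    rfl
  rw [hcoe, hcoe] at hval
  rw [← Ideal.mem_span_singleton]
  exact Ideal.Quotient.eq.mp hval

/-- Step 2: differentiating the congruence yields that `X^d` divides the
"logarithmic derivative" sum. -/
theorem trunc_step2 (d : ℕ) (r : ℕ → ℤ)
    (hdvd : (Polynomial.X : Polynomial ℤ)^(d+1) ∣
      (∏ ℓ ∈ Finset.Icc 1 d, vpoly ℓ ^ ((r ℓ).toNat + 1)) -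
      (∏ ℓ ∈ Finset.Icc 1 d, vpoly ℓ ^ ((-r ℓ).toNat + 1))) :
    (Polynomial.X : Polynomial ℤ)^d ∣
      ∑ ℓ ∈ Finset.Icc 1 d, C (r ℓ * ℓ) * ∏ j ∈ (Finset.Icc 1 d).erase ℓ, vpoly j := by
  classical
  set s := Finset.Icc 1 d with hs
  set P : Polynomial ℤ := ∏ ℓ ∈ s, vpoly ℓ ^ ((r ℓ).toNat + 1) with hP
  set Q : Polynomial ℤ := ∏ ℓ ∈ s, vpoly ℓ ^ ((-r ℓ).toNat + 1) with hQ
  have h1 : X^d ∣ derivative P - derivative Q := by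
    obtain ⟨c, hc⟩ := hdvd
    refine ⟨C ((d:ℤ)+1) * c + X * derivative c, ?_⟩
    rw [← derivative_sub, hc, derivative_mul, derivative_X_pow]
    simp only [Nat.add_sub_cancel, Nat.cast_add, Nat.cast_one]
    ring
  have h2 : (X : Polynomial ℤ)^d ∣ P - Q :=
    dvd_trans (pow_dvd_pow X (Nat.le_succ d)) hdvd
  have hP'Q : (X : Polynomial ℤ)^d ∣ derivative P * Q - P * derivative Q := by
    have : derivative P * Q - P * derivative Q
        = (derivative P - derivative Q) * Q - (P - Q) * derivative Q := by ring
    rw [this]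
    exact dvd_sub (h1.mul_right _) (h2.mul_right _)
  have key : (∑ ℓ ∈ s, C (((r ℓ).toNat : ℤ) + 1) * derivative (vpoly ℓ) * ∏ j ∈ s.erase ℓ, vpoly j)
      - (∑ ℓ ∈ s, C (((-r ℓ).toNat : ℤ) + 1) * derivative (vpoly ℓ) * ∏ j ∈ s.erase ℓ, vpoly j)
      = -∑ ℓ ∈ s, C (r ℓ * ℓ) * ∏ j ∈ s.erase ℓ, vpoly j := by
    rw [← Finset.sum_sub_distrib, ← Finset.sum_neg_distrib]
    refine sum_congr rfl fun ℓ _ => ?_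
    rw [derivative_vpoly, ← sub_mul, ← sub_mul, ← C_sub,
      show (((r ℓ).toNat : ℤ) + 1) - (((-r ℓ).toNat : ℤ) + 1) = r ℓ by omega,
      ← C_mul, show r ℓ * (-(ℓ:ℤ)) = -(r ℓ * ℓ) by ring, C_neg, neg_mul]
  have hid : derivative P * Q - P * derivative Q
      = -(((∏ ℓ ∈ s, vpoly ℓ ^ (r ℓ).toNat) * (∏ ℓ ∈ s, vpoly ℓ ^ (-r ℓ).toNat)
            * ∏ ℓ ∈ s, vpoly ℓ) *
          ∑ ℓ ∈ s, C (r ℓ * ℓ) * ∏ j ∈ s.erase ℓ, vpoly j) := by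
    have hPe : P = (∏ ℓ ∈ s, vpoly ℓ ^ (r ℓ).toNat) * ∏ ℓ ∈ s, vpoly ℓ := by
      rw [hP, ← prod_mul_distrib]; exact prod_congr rfl fun _ _ => pow_succ _ _
    have hQe : Q = (∏ ℓ ∈ s, vpoly ℓ ^ (-r ℓ).toNat) * ∏ ℓ ∈ s, vpoly ℓ := by
      rw [hQ, ← prod_mul_distrib]; exact prod_congr rfl fun _ _ => pow_succ _ _
    rw [hP, hQ, derivative_prod_pow_succ, derivative_prod_pow_succ, ← hP, ← hQ, hPe, hQe]
    linear_combination ((∏ ℓ ∈ s, vpoly ℓ ^ (r ℓ).toNat) * (∏ ℓ ∈ s, vpoly ℓ ^ (-r ℓ).toNat)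
      * ∏ ℓ ∈ s, vpoly ℓ) * key
  rw [hid, dvd_neg] at hP'Q
  refine Polynomial.prime_X.pow_dvd_of_dvd_mul_left _ ?_ hP'Q
  rw [Polynomial.X_dvd_iff, coeff_zero_eq_eval_zero]
  simp [vpoly, eval_prod]

/-- Step 3: the sum is a polynomial of degree `< d`, hence zero; evaluating at
`1/ℓ₀` shows each `r ℓ₀` vanishes. -/
theorem trunc_step3 (d : ℕ) (hd : 0 < d) (r : ℕ → ℤ)
    (hdvd : (Polynomial.X : Polynomial ℤ)^d ∣
      ∑ ℓ ∈ Finset.Icc 1 d, C (r ℓ * ℓ) * ∏ j ∈ (Finset.Icc 1 d).erase ℓ, vpoly j) :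
    ∀ ℓ ∈ Finset.Icc 1 d, r ℓ = 0 := by
  classical
  set s := Finset.Icc 1 d with hs
  set S : Polynomial ℤ := ∑ ℓ ∈ s, C (r ℓ * ℓ) * ∏ j ∈ s.erase ℓ, vpoly j with hSdef
  have hdegv : ∀ j, (vpoly j).natDegree ≤ 1 := by
    intro j
    refine le_trans (natDegree_sub_le _ _) ?_
    simp only [natDegree_one]
    refine max_le (by omega) (le_trans (natDegree_mul_le) ?_)
    simp [natDegree_natCast]
  have hdegS : S.natDegree ≤ d - 1 := by
    refine natDegree_sum_le_of_forall_le _ _ fun ℓ hℓ => ?_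
    refine le_trans natDegree_mul_le ?_
    rw [natDegree_C, zero_add]
    refine le_trans (natDegree_prod_le _ _) ?_
    refine le_trans (Finset.sum_le_card_nsmul _ _ 1 fun j _ => hdegv j) ?_
    rw [smul_eq_mul, mul_one, Finset.card_erase_of_mem hℓ, hs, Nat.card_Icc]
    omega
  have hS0 : S = 0 := by
    by_contra hS
    have := Polynomial.natDegree_le_of_dvd hdvd hS
    rw [natDegree_X_pow] at this
    omega
  intro ℓ₀ hℓ₀
  have hℓ₀' : 1 ≤ ℓ₀ ∧ ℓ₀ ≤ d := by rwa [hs, Finset.mem_Icc] at hℓ₀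
  have hℓ₀q : (ℓ₀ : ℚ) ≠ 0 := by exact_mod_cast (by omega : ℓ₀ ≠ 0)
  set x : ℚ := (ℓ₀ : ℚ)⁻¹ with hx
  have h0 := congrArg (Polynomial.aeval x) hS0
  rw [map_zero, hSdef, map_sum] at h0
  have hterm : ∀ ℓ ∈ s, (Polynomial.aeval x) (C (r ℓ * ℓ) * ∏ j ∈ s.erase ℓ, vpoly j)
      = (r ℓ * ℓ : ℚ) * ∏ j ∈ s.erase ℓ, (1 - (j : ℚ) * x) := by
    intro ℓ _
    rw [map_mul, map_prod]
    push_cast [aeval_C]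
    refine congrArg _ (Finset.prod_congr rfl fun j _ => ?_)
    simp [vpoly]
  rw [Finset.sum_congr rfl hterm] at h0
  rw [Finset.sum_eq_single_of_mem ℓ₀ hℓ₀ (fun ℓ hℓ hne => ?_)] at h0
  · -- main term
    have hprod : ∏ j ∈ s.erase ℓ₀, (1 - (j : ℚ) * x) ≠ 0 := by
      refine Finset.prod_ne_zero_iff.mpr fun j hj => ?_
      have hj' := Finset.mem_erase.mp hj
      intro heq
      rw [sub_eq_zero] at heq
      rw [hx, eq_comm, mul_inv_eq_one₀ hℓ₀q] at heq
      exact hj'.1 (by exact_mod_cast heq)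
    have h00 : (r ℓ₀ * ℓ₀ : ℚ) = 0 := by
      rcases mul_eq_zero.mp h0 with h | h
      · exact h
      · exact absurd h hprod
    have : (r ℓ₀ : ℚ) = 0 := by
      rcases mul_eq_zero.mp h00 with h | h
      · exact h
      · exact absurd h hℓ₀q
    exact_mod_cast this
  · -- other terms vanish
    refine mul_eq_zero_of_right _ (Finset.prod_eq_zero (Finset.mem_erase.mpr ⟨hne.symm, hℓ₀⟩) ?_)
    rw [hx, mul_inv_cancel₀ hℓ₀q, sub_self]

/-- First assertion of Lemma 3.2: in the unit group of `ℤ[X]/(X^(d+1))`, the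
residue classes of `1 - ℓX` for `ℓ = 1, …, d` are free generators of the
subgroup they generate: any ℤ-linear (multiplicative) relation among them is
trivial. -/
theorem chern_generators_free (d : ℕ) (hd : 0 < d) (r : ℕ → ℤ)
    (u : ℕ → (TruncPoly d)ˣ)
    (hu : ∀ ℓ, (u ℓ : TruncPoly d) = oneSubMulX d ℓ)
    (h : ∏ ℓ ∈ Finset.Icc 1 d, u ℓ ^ r ℓ = 1) :
    ∀ ℓ ∈ Finset.Icc 1 d, r ℓ = 0 :=
  trunc_step3 d hd r (trunc_step2 d r (trunc_step1 d r u hu h))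
end

section
/- Let d be a positive integer. Consider the product group (ℤ[X]/(X^{d+1}))^× × ℤ, where the operation on the first factor is multiplication of units and on the second factor is addition of integers. For all integers r_0, r_1, ..., r_d, if ∏_{ℓ=0}^{d} (1 - ℓX)^{r_ℓ} = 1 in (ℤ[X]/(X^{d+1}))^× and r_0 + r_1 + ... + r_d = 0, then r_0 = r_1 = ... = r_d = 0. Equivalently, the d+1 elements (1, 1), (1 - X, 1), ..., (1 - dX, 1) are free generators of the subgroup of (ℤ[X]/(X^{d+1}))^× × ℤ that they generate, which is therefore free abelian of rank d+1. -/
open Polynomial Finset in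
lemma logder (s : Finset ℕ) (f : ℕ → Polynomial ℤ) (c : ℕ → ℕ) :
    Polynomial.derivative (∏ ℓ ∈ s, f ℓ ^ (c ℓ + 1)) * ∏ ℓ ∈ s, f ℓ
      = (∏ ℓ ∈ s, f ℓ ^ (c ℓ + 1)) *
        ∑ ℓ ∈ s, ((c ℓ : Polynomial ℤ) + 1) * Polynomial.derivative (f ℓ)
            * ∏ j ∈ s.erase ℓ, f j := by
  classical
  induction s using Finset.induction_on with
  | empty => simp
  | insert a s ha ih =>
    rw [Finset.prod_insert ha, Finset.prod_insert ha, Finset.sum_insert ha,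
        Finset.erase_insert ha]
    have hsum : ∑ ℓ ∈ s, ((c ℓ : Polynomial ℤ) + 1) * Polynomial.derivative (f ℓ)
            * ∏ j ∈ (insert a s).erase ℓ, f j
        = f a * ∑ ℓ ∈ s, ((c ℓ : Polynomial ℤ) + 1) * Polynomial.derivative (f ℓ)
            * ∏ j ∈ s.erase ℓ, f j := by
      rw [Finset.mul_sum]
      refine Finset.sum_congr rfl fun ℓ hℓ => ?_
      have hne : a ≠ ℓ := fun h => ha (h ▸ hℓ)
      rw [Finset.erase_insert_of_ne hne,
        Finset.prod_insert (fun h => ha (Finset.mem_of_mem_erase h))]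
      ring
    rw [hsum, derivative_mul, derivative_pow_succ]
    simp only [Polynomial.C_add, Polynomial.C_1, Polynomial.C_eq_natCast]
    linear_combination (f a ^ (c a + 1) * f a) * ih

open Polynomial Finset in
/-- Second assertion of Lemma 3.2: the `d+1` elements
`(1, 1), (1 - X, 1), …, (1 - dX, 1)` of `(ℤ[X]/(X^(d+1)))ˣ × ℤ` are free
generators of the subgroup they generate: if
`∏_{ℓ=0}^{d} (1 - ℓX)^{r_ℓ} = 1` and `∑_{ℓ=0}^{d} r_ℓ = 0`, then all
`r_ℓ` vanish. -/
theorem chern_rank_generators_free (d : ℕ) (hd : 0 < d) (r : ℕ → ℤ)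
    (u : ℕ → (TruncPoly d)ˣ)
    (hu : ∀ ℓ, (u ℓ : TruncPoly d) = oneSubMulX d ℓ)
    (h : ∏ ℓ ∈ Finset.range (d + 1), u ℓ ^ r ℓ = 1)
    (hsum : ∑ ℓ ∈ Finset.range (d + 1), r ℓ = 0) :
    ∀ ℓ ∈ Finset.range (d + 1), r ℓ = 0 := by
  classical
  set I : Ideal (Polynomial ℤ) := Ideal.span ({Polynomial.X ^ (d + 1)} : Set (Polynomial ℤ))
    with hI
  set f : ℕ → Polynomial ℤ := fun ℓ => 1 - (ℓ : Polynomial ℤ) * Polynomial.X with hf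
  set s : Finset ℕ := (Finset.range (d + 1)).erase 0 with hs
  set a : ℕ → ℕ := fun ℓ => (r ℓ).toNat with ha
  set b : ℕ → ℕ := fun ℓ => (-(r ℓ)).toNat with hb
  have hab : ∀ ℓ, (a ℓ : ℤ) - (b ℓ : ℤ) = r ℓ := fun ℓ => by simp [ha, hb]
  have hu0 : u 0 = 1 := by
    ext
    rw [hu 0]
    simp [oneSubMulX]
    rfl
  -- restrict the product to s
  have h' : ∏ ℓ ∈ s, u ℓ ^ r ℓ = 1 := by
    have he := Finset.prod_erase (f := fun ℓ => u ℓ ^ r ℓ) (a := 0) (Finset.range (d + 1))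
      (by simp only [hu0, one_zpow])
    rw [hs, he]
    exact h
  -- separate positive and negative exponents
  have key : (∏ ℓ ∈ s, u ℓ ^ a ℓ) = ∏ ℓ ∈ s, u ℓ ^ b ℓ := by
    have h2 : ∀ ℓ ∈ s, u ℓ ^ r ℓ = u ℓ ^ (a ℓ : ℤ) / u ℓ ^ (b ℓ : ℤ) := fun ℓ _ => by
      rw [← hab ℓ, zpow_sub, div_eq_mul_inv]
    rw [Finset.prod_congr rfl h2, Finset.prod_div_distrib, div_eq_one] at h'
    simpa [zpow_natCast] using h'
  -- transfer to the ring, with an extra factor ∏ f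
  set P : Polynomial ℤ := ∏ ℓ ∈ s, f ℓ ^ (a ℓ + 1) with hP
  set Q : Polynomial ℤ := ∏ ℓ ∈ s, f ℓ ^ (b ℓ + 1) with hQ
  set R : Polynomial ℤ := ∏ ℓ ∈ s, f ℓ with hR
  have key2 : Ideal.Quotient.mk I P = Ideal.Quotient.mk I Q := by
    have hval := congrArg (Units.coeHom (TruncPoly d)) key
    rw [map_prod, map_prod] at hval
    simp only [Units.coeHom_apply, Units.val_pow_eq_pow_val, hu] at hval
    have hmk : ∀ c : ℕ → ℕ,
        Ideal.Quotient.mk I (∏ ℓ ∈ s, f ℓ ^ (c ℓ + 1))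
          = ∏ ℓ ∈ s, (oneSubMulX d ℓ) ^ (c ℓ + 1) := fun c => by
      rw [map_prod]
      exact Finset.prod_congr rfl fun ℓ _ => by rw [map_pow]; rfl
    rw [hmk, hmk]
    simp only [pow_succ]
    rw [Finset.prod_mul_distrib, Finset.prod_mul_distrib, hval]
  have hdvd : (Polynomial.X : Polynomial ℤ) ^ (d + 1) ∣ P - Q := by
    rw [Ideal.Quotient.eq] at key2
    rwa [hI, Ideal.mem_span_singleton] at key2
  -- X^d divides the "Wronskian"
  have hdvd2 : (Polynomial.X : Polynomial ℤ) ^ d ∣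
      Polynomial.derivative P * Q - P * Polynomial.derivative Q := by
    obtain ⟨c, hc⟩ := hdvd
    have hPQ : P = Q + Polynomial.X ^ (d + 1) * c := by linear_combination hc
    refine ⟨((d : Polynomial ℤ) + 1) * c * Q
      + Polynomial.X * (Polynomial.derivative c * Q - c * Polynomial.derivative Q), ?_⟩
    rw [hPQ]
    simp only [derivative_add, derivative_mul, derivative_X_pow, Polynomial.C_eq_natCast,
      Nat.add_sub_cancel]
    push_cast
    ring
  -- the combinatorial sum W
  set W : Polynomial ℤ := ∑ ℓ ∈ s, Polynomial.C (r ℓ) * Polynomial.derivative (f ℓ)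
      * ∏ j ∈ s.erase ℓ, f j with hW
  have hPQW : (Polynomial.derivative P * Q - P * Polynomial.derivative Q) * R
      = P * (Q * W) := by
    have hPa := logder s f a
    have hQb := logder s f b
    have hSab : (∑ ℓ ∈ s, ((a ℓ : Polynomial ℤ) + 1) * Polynomial.derivative (f ℓ)
            * ∏ j ∈ s.erase ℓ, f j)
        - (∑ ℓ ∈ s, ((b ℓ : Polynomial ℤ) + 1) * Polynomial.derivative (f ℓ)
            * ∏ j ∈ s.erase ℓ, f j) = W := by
      rw [hW, ← Finset.sum_sub_distrib]
      refine Finset.sum_congr rfl fun ℓ _ => ?_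
      have : (Polynomial.C (r ℓ) : Polynomial ℤ) = (a ℓ : Polynomial ℤ) - (b ℓ : Polynomial ℤ) := by
        rw [← hab ℓ]
        simp [map_sub, Polynomial.C_eq_natCast]
      rw [this]; ring
    simp only [← hP, ← hQ, ← hR] at hPa hQb
    linear_combination Q * hPa - P * hQb + P * Q * hSab
  have hXdW : (Polynomial.X : Polynomial ℤ) ^ d ∣ W := by
    have hXP : ¬ (Polynomial.X : Polynomial ℤ) ∣ P := by
      rw [Polynomial.X_dvd_iff, Polynomial.coeff_zero_eq_eval_zero]
      simp [hP, Polynomial.eval_prod, hf]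
    have hXQ : ¬ (Polynomial.X : Polynomial ℤ) ∣ Q := by
      rw [Polynomial.X_dvd_iff, Polynomial.coeff_zero_eq_eval_zero]
      simp [hQ, Polynomial.eval_prod, hf]
    have h1 : (Polynomial.X : Polynomial ℤ) ^ d ∣ P * (Q * W) := by
      rw [← hPQW]; exact Dvd.dvd.mul_right hdvd2 R
    exact Polynomial.prime_X.pow_dvd_of_dvd_mul_left _ hXQ
      (Polynomial.prime_X.pow_dvd_of_dvd_mul_left _ hXP h1)
  have hdf : ∀ ℓ : ℕ, Polynomial.derivative (f ℓ) = -((ℓ : ℤ[X])) := by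
    intro ℓ
    simp [hf]
  -- W vanishes by degree considerations
  have hW0 : W = 0 := by
    by_contra h0
    have hle := Polynomial.natDegree_le_of_dvd hXdW h0
    rw [Polynomial.natDegree_X_pow] at hle
    have hdeg : W.natDegree ≤ d - 1 := by
      rw [hW]
      apply Polynomial.natDegree_sum_le_of_forall_le
      intro ℓ hℓ
      have hCD : Polynomial.C (r ℓ) * Polynomial.derivative (f ℓ)
          = Polynomial.C (r ℓ * -(ℓ : ℤ)) := by
        rw [hdf ℓ, map_mul]
        congr 1
        simp
      calc (Polynomial.C (r ℓ) * Polynomial.derivative (f ℓ)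
              * ∏ j ∈ s.erase ℓ, f j).natDegree
          ≤ (Polynomial.C (r ℓ) * Polynomial.derivative (f ℓ)).natDegree
              + (∏ j ∈ s.erase ℓ, f j).natDegree := Polynomial.natDegree_mul_le
        _ = (∏ j ∈ s.erase ℓ, f j).natDegree := by rw [hCD, Polynomial.natDegree_C, zero_add]
        _ ≤ ∑ j ∈ s.erase ℓ, (f j).natDegree := Polynomial.natDegree_prod_le _ _
        _ ≤ ∑ _j ∈ s.erase ℓ, 1 := Finset.sum_le_sum (fun j _ => by
              simp only [hf]
              compute_degree)
        _ = (s.erase ℓ).card := by simp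
        _ = s.card - 1 := Finset.card_erase_of_mem hℓ
        _ = d - 1 := by
              rw [hs, Finset.card_erase_of_mem (Finset.mem_range.mpr (by omega)),
                Finset.card_range]
              omega
    omega
  -- evaluate W at 1/m for each m ∈ s
  have hr : ∀ m ∈ s, r m = 0 := by
    intro m hm
    have hm1 : m ≠ 0 := Finset.ne_of_mem_erase hm
    have hm0 : (m : ℚ) ≠ 0 := Nat.cast_ne_zero.mpr hm1
    set φ : Polynomial ℤ →ₐ[ℤ] ℚ := Polynomial.aeval ((m : ℚ)⁻¹) with hφ
    have hfj : ∀ j : ℕ, φ (f j) = 1 - (j : ℚ) * (m : ℚ)⁻¹ := by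
      intro j
      simp [hf, hφ]
    have h0 : ∑ ℓ ∈ s, φ (Polynomial.C (r ℓ) * Polynomial.derivative (f ℓ)
        * ∏ j ∈ s.erase ℓ, f j) = 0 := by
      rw [← map_sum, ← hW, hW0, map_zero]
    rw [Finset.sum_eq_single m (fun j hj hjm => ?_) (fun hms => absurd hm hms)] at h0
    · rw [map_mul, map_mul, map_prod] at h0
      have hC : φ (Polynomial.C (r m)) = (r m : ℚ) := by simp [hφ]
      have hD : φ (Polynomial.derivative (f m)) = -(m : ℚ) := by
        rw [hdf m]
        simp [hφ]
      rw [hC, hD] at h0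
      have hprod : (∏ j ∈ s.erase m, φ (f j)) ≠ 0 := by
        apply Finset.prod_ne_zero_iff.mpr
        intro j hj
        rw [hfj j]
        have hjm : j ≠ m := Finset.ne_of_mem_erase hj
        intro hcon
        apply hjm
        have h1 : (j : ℚ) * (m : ℚ)⁻¹ = 1 := by linarith
        rw [mul_inv_eq_one₀ hm0] at h1
        exact_mod_cast h1
      have hrm : (r m : ℚ) = 0 := by
        rcases mul_eq_zero.mp h0 with h2 | h2
        · rcases mul_eq_zero.mp h2 with h3 | h3
          · exact h3
          · exact absurd (neg_eq_zero.mp h3) hm0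
        · exact absurd h2 hprod
      exact_mod_cast hrm
    · rw [map_mul, map_prod]
      have hmem : m ∈ s.erase j := Finset.mem_erase.mpr ⟨Ne.symm hjm, hm⟩
      rw [Finset.prod_eq_zero hmem, mul_zero]
      rw [hfj m]
      rw [mul_inv_cancel₀ hm0]
      ring
  -- conclude
  intro ℓ hℓ
  by_cases h0 : ℓ = 0
  · subst h0
    have h00 : 0 ∈ Finset.range (d + 1) := Finset.mem_range.mpr (by omega)
    have hsplit := Finset.add_sum_erase (Finset.range (d + 1)) r h00
    rw [Finset.sum_eq_zero hr] at hsplit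
    rw [← hsplit] at hsum
    simpa using hsum
  · exact hr ℓ (Finset.mem_erase.mpr ⟨h0, hℓ⟩)
end

section
/- Let d be a positive integer. For all integers r_1, ..., r_d, if ∏_{ℓ=1}^{d} (1 - ℓX)^{r_ℓ} = 1 in the unit group (ℤ[X]/(X^{d+1}))^×, then for every integer k with 1 ≤ k ≤ d one has ∑_{ℓ=1}^{d} ℓ^k · r_ℓ = 0. -/
open Polynomial

namespace PSV

noncomputable def Iideal (d : ℕ) : Ideal (Polynomial ℤ) := Ideal.span {Polynomial.X ^ (d+1)}
noncomputable def Jideal (d : ℕ) : Ideal (Polynomial ℤ) := Ideal.span {Polynomial.X ^ d}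

lemma I_le_J (d : ℕ) : Iideal d ≤ Jideal d := by
  rw [Iideal, Ideal.span_le, Set.singleton_subset_iff]
  exact Ideal.mem_span_singleton.2 (pow_dvd_pow _ (Nat.le_succ d))

noncomputable def projJ (d : ℕ) : TruncPoly d →+* (Polynomial ℤ ⧸ Jideal d) :=
  Ideal.Quotient.factor (I_le_J d)

lemma projJ_mk (d : ℕ) (p : Polynomial ℤ) :
    projJ d (Ideal.Quotient.mk (Iideal d) p) = Ideal.Quotient.mk (Jideal d) p :=
  Ideal.Quotient.factor_mk _ p

noncomputable def Dbar (d : ℕ) : TruncPoly d → (Polynomial ℤ ⧸ Jideal d) :=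
  fun x => Quotient.liftOn' x (fun p => Ideal.Quotient.mk (Jideal d) (derivative p))
    (by
      intro a b hab
      have hmem : a - b ∈ Iideal d := (Submodule.quotientRel_def _).1 hab
      obtain ⟨c, hc⟩ := Ideal.mem_span_singleton.1 hmem
      rw [Ideal.Quotient.mk_eq_mk_iff_sub_mem, ← derivative_sub, hc]
      refine Ideal.mem_span_singleton.2 ?_
      rw [derivative_mul, derivative_X_pow]
      refine dvd_add (Dvd.dvd.mul_right ?_ c) (Dvd.dvd.mul_right (pow_dvd_pow _ (Nat.le_succ d)) _)
      simp only [Nat.add_sub_cancel]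
      exact Dvd.intro_left _ rfl)

lemma Dbar_mk (d : ℕ) (p : Polynomial ℤ) :
    Dbar d (Ideal.Quotient.mk (Iideal d) p) = Ideal.Quotient.mk (Jideal d) (derivative p) := rfl

lemma mk_mul' (d : ℕ) (p q : Polynomial ℤ) :
    (Ideal.Quotient.mk (Iideal d) p) * (Ideal.Quotient.mk (Iideal d) q)
      = Ideal.Quotient.mk (Iideal d) (p * q) := (map_mul _ _ _).symm

lemma Dbar_mul (d : ℕ) (x y : TruncPoly d) :
    Dbar d (x * y) = Dbar d x * projJ d y + projJ d x * Dbar d y := by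
  induction x using Quotient.inductionOn' with
  | h p =>
    induction y using Quotient.inductionOn' with
    | h q =>
      have hp : (Quotient.mk'' p : TruncPoly d) = Ideal.Quotient.mk (Iideal d) p := rfl
      have hq : (Quotient.mk'' q : TruncPoly d) = Ideal.Quotient.mk (Iideal d) q := rfl
      have hpq : @HMul.hMul (TruncPoly d) (TruncPoly d) (TruncPoly d) _ (Quotient.mk'' p) (Quotient.mk'' q) =
          Ideal.Quotient.mk (Iideal d) (p * q) := (map_mul (Ideal.Quotient.mk (Iideal d)) p q).symm
      rw [hpq, hp, hq, Dbar_mk, Dbar_mk, Dbar_mk, projJ_mk, projJ_mk, derivative_mul,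
        map_add, map_mul, map_mul]

noncomputable def logDer (d : ℕ) (v : (TruncPoly d)ˣ) : Polynomial ℤ ⧸ Jideal d :=
  Dbar d ↑v * projJ d ↑v⁻¹

lemma proj_mul_inv (d : ℕ) (v : (TruncPoly d)ˣ) :
    projJ d ↑v * projJ d ↑v⁻¹ = 1 := by
  rw [← map_mul, Units.mul_inv, map_one]

lemma logDer_mul (d : ℕ) (v w : (TruncPoly d)ˣ) :
    logDer d (v * w) = logDer d v + logDer d w := by
  have ha := proj_mul_inv d v
  have hb := proj_mul_inv d w
  simp only [logDer, Units.val_mul, mul_inv_rev, map_mul, Dbar_mul]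
  linear_combination (Dbar d ↑v * projJ d ↑v⁻¹) * hb + (Dbar d ↑w * projJ d ↑w⁻¹) * ha

lemma logDer_one (d : ℕ) : logDer d 1 = 0 := by
  have h1 : (↑(1 : (TruncPoly d)ˣ) : TruncPoly d) = Ideal.Quotient.mk (Iideal d) 1 :=
    (map_one _).symm
  rw [logDer, inv_one, h1, Dbar_mk, derivative_one, map_zero, zero_mul]

noncomputable def F (d : ℕ) : (TruncPoly d)ˣ →* Multiplicative (Polynomial ℤ ⧸ Jideal d) where
  toFun v := Multiplicative.ofAdd (logDer d v)
  map_one' := by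
    show Multiplicative.ofAdd (logDer d 1) = 1
    rw [logDer_one]; rfl
  map_mul' v w := by
    show Multiplicative.ofAdd (logDer d (v * w)) =
      Multiplicative.ofAdd (logDer d v) * Multiplicative.ofAdd (logDer d w)
    rw [logDer_mul]; rfl

noncomputable def gser (d ℓ : ℕ) : Polynomial ℤ :=
  ∑ i ∈ Finset.range d, ((ℓ : Polynomial ℤ) * Polynomial.X) ^ i

lemma gser_coeff (d ℓ : ℕ) {j : ℕ} (hj : j < d) : (gser d ℓ).coeff j = (ℓ : ℤ) ^ j := by
  rw [gser, finset_sum_coeff,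
    Finset.sum_congr rfl (fun i _ => by
      rw [mul_pow, ← C_eq_natCast, ← C_pow, coeff_C_mul, coeff_X_pow]),
    Finset.sum_eq_single j (fun i _ hne => by simp [Ne.symm hne]) (fun hx => by
      exact absurd (Finset.mem_range.2 hj) hx)]
  simp

lemma geom_key (d ℓ : ℕ) :
    (1 - (ℓ : Polynomial ℤ) * X) * gser d ℓ = 1 - ((ℓ : Polynomial ℤ) * X) ^ d := by
  have := geom_sum_mul ((ℓ : Polynomial ℤ) * X) d
  rw [gser]
  linear_combination -this

lemma mk_geom (d ℓ : ℕ) :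
    Ideal.Quotient.mk (Jideal d) (1 - (ℓ : Polynomial ℤ) * X) *
      Ideal.Quotient.mk (Jideal d) (gser d ℓ) = 1 := by
  rw [← map_mul, geom_key, map_sub, map_one]
  have : Ideal.Quotient.mk (Jideal d) (((ℓ : Polynomial ℤ) * X) ^ d) = 0 := by
    rw [Ideal.Quotient.eq_zero_iff_mem]
    exact Ideal.mem_span_singleton.2 (by rw [mul_pow]; exact Dvd.intro_left _ rfl)
  rw [this, sub_zero]

lemma logDer_u (d ℓ : ℕ) (v : (TruncPoly d)ˣ) (hv : (v : TruncPoly d) = oneSubMulX d ℓ) :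
    logDer d v = Ideal.Quotient.mk (Jideal d) (-(ℓ : Polynomial ℤ) * gser d ℓ) := by
  have hvI : (v : TruncPoly d) = Ideal.Quotient.mk (Iideal d) (1 - (ℓ : Polynomial ℤ) * X) := hv
  have hproj : projJ d ↑v = Ideal.Quotient.mk (Jideal d) (1 - (ℓ : Polynomial ℤ) * X) := by
    rw [hvI, projJ_mk]
  have hinv : projJ d ↑v⁻¹ = Ideal.Quotient.mk (Jideal d) (gser d ℓ) := by
    have h1 := proj_mul_inv d v
    rw [hproj] at h1
    calc projJ d ↑v⁻¹ = projJ d ↑v⁻¹ *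
          (Ideal.Quotient.mk (Jideal d) (1 - (ℓ : Polynomial ℤ) * X) *
            Ideal.Quotient.mk (Jideal d) (gser d ℓ)) := by rw [mk_geom, mul_one]
      _ = (Ideal.Quotient.mk (Jideal d) (1 - (ℓ : Polynomial ℤ) * X) * projJ d ↑v⁻¹) *
            Ideal.Quotient.mk (Jideal d) (gser d ℓ) := by ring
      _ = Ideal.Quotient.mk (Jideal d) (gser d ℓ) := by rw [h1, one_mul]
  have hder : derivative (1 - (ℓ : Polynomial ℤ) * X) = -(ℓ : Polynomial ℤ) := by
    simp
  rw [logDer, hvI, Dbar_mk, hder, hinv, ← map_mul]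

end PSV

open PSV in
/-- Key intermediate step in the proof of Lemma 3.2: if
`∏_{ℓ=1}^{d} (1 - ℓX)^{r_ℓ} = 1` in `(ℤ[X]/(X^(d+1)))ˣ`, then the power
sums `∑_{ℓ=1}^{d} ℓ^k · r_ℓ` vanish for `k = 1, …, d`. -/
theorem power_sums_vanish (d : ℕ) (hd : 0 < d) (r : ℕ → ℤ)
    (u : ℕ → (TruncPoly d)ˣ)
    (hu : ∀ ℓ, (u ℓ : TruncPoly d) = oneSubMulX d ℓ)
    (h : ∏ ℓ ∈ Finset.Icc 1 d, u ℓ ^ r ℓ = 1) :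
    ∀ k ∈ Finset.Icc 1 d, ∑ ℓ ∈ Finset.Icc 1 d, (ℓ : ℤ) ^ k * r ℓ = 0 := by
  intro k hk
  obtain ⟨hk1, hkd⟩ := Finset.mem_Icc.1 hk
  -- apply F to h
  have hF := congrArg (F d) h
  rw [map_prod, map_one] at hF
  have hsum : ∑ ℓ ∈ Finset.Icc 1 d, r ℓ • logDer d (u ℓ) = 0 := by
    have h2 := congrArg Multiplicative.toAdd hF
    have h3 : Multiplicative.toAdd (∏ x ∈ Finset.Icc 1 d, (F d) (u x ^ r x))
        = ∑ x ∈ Finset.Icc 1 d, Multiplicative.toAdd ((F d) (u x ^ r x)) := rfl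
    rw [h3] at h2
    have h4 : ∀ x, Multiplicative.toAdd ((F d) (u x ^ r x)) = r x • logDer d (u x) := by
      intro x
      rw [map_zpow, toAdd_zpow]
      rfl
    simpa only [h4, toAdd_one] using h2
  -- rewrite each logDer
  have hsum2 : Ideal.Quotient.mk (Jideal d)
      (∑ ℓ ∈ Finset.Icc 1 d, r ℓ • (-(ℓ : Polynomial ℤ) * gser d ℓ)) = 0 := by
    rw [map_sum]
    rw [← hsum]
    refine Finset.sum_congr rfl (fun ℓ _ => ?_)
    rw [map_zsmul, logDer_u d ℓ (u ℓ) (hu ℓ)]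
  set Q : Polynomial ℤ := ∑ ℓ ∈ Finset.Icc 1 d, r ℓ • (-(ℓ : Polynomial ℤ) * gser d ℓ) with hQ
  obtain ⟨c, hc⟩ := Ideal.mem_span_singleton.1 (Ideal.Quotient.eq_zero_iff_mem.1 hsum2)
  have hcoeff0 : Q.coeff (k - 1) = 0 := by
    rw [hc, mul_comm, coeff_mul_X_pow']
    have : ¬ d ≤ k - 1 := by omega
    simp [this]
  have hcoeff : Q.coeff (k - 1) = ∑ ℓ ∈ Finset.Icc 1 d, -((ℓ : ℤ) ^ k * r ℓ) := by
    rw [hQ, finset_sum_coeff]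
    refine Finset.sum_congr rfl (fun ℓ _ => ?_)
    rw [coeff_smul, neg_mul, coeff_neg, coeff_natCast_mul, gser_coeff d ℓ (by omega : k - 1 < d)]
    have : (ℓ : ℤ) * (ℓ : ℤ) ^ (k - 1) = (ℓ : ℤ) ^ k := by
      rw [← pow_succ']
      congr 1
      omega
    rw [smul_eq_mul]
    push_cast
    linear_combination -r ℓ * this
  rw [hcoeff, Finset.sum_neg_distrib] at hcoeff0
  linarith [hcoeff0]
end

section
/- Let d be a nonnegative integer and m an integer. Work in the ring of formal power series in one variable X over the polynomial ring ℚ[t]. Let E be the power series whose n-th coefficient is (t - m)^n / n! (the expansion of e^{(t-m)X}), and let Q be the power series whose n-th coefficient is the constant polynomial (-1)^n / (n+1)! (the expansion of (1 - e^{-X})/X); Q has constant coefficient 1, hence is a unit. Then the coefficient of X^d in E · Q^{-(d+1)} equals the polynomial (1/d!) · ∏_{i=1}^{d} (t - m + i) in ℚ[t], i.e. it equals binom(t + d - m, d). -/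
open PowerSeries

noncomputable def expSeries (m : ℤ) : PowerSeries (Polynomial ℚ) :=
  PowerSeries.mk fun n =>
    ((n.factorial : ℚ))⁻¹ • (Polynomial.X - Polynomial.C (m : ℚ)) ^ n

noncomputable def toddDenom : PowerSeries (Polynomial ℚ) :=
  PowerSeries.mk fun n => Polynomial.C ((-1 : ℚ) ^ n / ((n + 1).factorial : ℚ))

namespace HRRAux

lemma constCoeff_todd : constantCoeff (R := Polynomial ℚ) toddDenom = 1 := by
  rw [← coeff_zero_eq_constantCoeff]
  simp [toddDenom]

lemma todd_ode :
    (X : PowerSeries (Polynomial ℚ)) * (d⁄dX (Polynomial ℚ) toddDenom)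
      = 1 - toddDenom - X * toddDenom := by
  refine PowerSeries.ext fun n => ?_
  cases n with
  | zero =>
      simp [toddDenom, coeff_zero_eq_constantCoeff, map_sub, constCoeff_todd]
  | succ k =>
      rw [coeff_succ_X_mul, coeff_derivative, map_sub, map_sub, coeff_one, coeff_succ_X_mul]
      simp only [toddDenom, coeff_mk, Nat.succ_ne_zero, if_false]
      rw [show ((k : Polynomial ℚ) + 1) = Polynomial.C ((k : ℚ) + 1) by simp,
        ← map_mul, zero_sub, ← map_neg, ← map_sub]
      congr 1
      have h1 : ((k + 1 + 1).factorial : ℚ) = (k + 1 + 1) * (k + 1).factorial := by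
        rw [Nat.factorial_succ]; push_cast; ring
      have h2 : ((k + 1).factorial : ℚ) ≠ 0 := Nat.cast_ne_zero.mpr (Nat.factorial_ne_zero _)
      rw [h1]
      field_simp
      ring

lemma coeff_pow_inv (v : (PowerSeries (Polynomial ℚ))ˣ)
    (hv : (v : PowerSeries (Polynomial ℚ)) = toddDenom) (d : ℕ) :
    PowerSeries.coeff (R := Polynomial ℚ) d
      (((v⁻¹ : (PowerSeries (Polynomial ℚ))ˣ) : PowerSeries (Polynomial ℚ)) ^ (d + 1)) = 1 := by
  set B : PowerSeries (Polynomial ℚ) :=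
    ((v⁻¹ : (PowerSeries (Polynomial ℚ))ˣ) : PowerSeries (Polynomial ℚ)) with hBdef
  have hBQ : B * toddDenom = 1 := by rw [← hv]; exact v.inv_mul
  have hB0 : constantCoeff (R := Polynomial ℚ) B = 1 := by
    have := congrArg (constantCoeff (R := Polynomial ℚ)) hBQ
    rw [map_mul, constCoeff_todd, mul_one, map_one] at this
    exact this
  induction d with
  | zero =>
      rw [pow_one, coeff_zero_eq_constantCoeff, hB0]
  | succ e ih =>
      have hD : d⁄dX (Polynomial ℚ) B = -B ^ 2 * d⁄dX (Polynomial ℚ) toddDenom := by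
        rw [← hv]; exact PowerSeries.derivative_inv v
      have hpow : d⁄dX (Polynomial ℚ) (B ^ (e + 1))
          = (e + 1) • (B ^ e • d⁄dX (Polynomial ℚ) B) := by
        simpa using Derivation.leibniz_pow (d⁄dX (Polynomial ℚ)) (a := B) (e + 1)
      have h2 : B ^ (e + 2) * toddDenom = B ^ (e + 1) := by
        rw [pow_succ, mul_assoc, hBQ, mul_one]
      have key : (X : PowerSeries (Polynomial ℚ)) * d⁄dX (Polynomial ℚ) (B ^ (e + 1))
          = ((e + 1 : ℕ) : PowerSeries (Polynomial ℚ)) *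
              ((1 + X) * B ^ (e + 1) - B ^ (e + 2)) := by
        rw [hpow, hD, smul_eq_mul, nsmul_eq_mul]
        linear_combination (-(((e + 1 : ℕ) : PowerSeries (Polynomial ℚ))) * B ^ (e + 2)) * todd_ode
          + (((e + 1 : ℕ) : PowerSeries (Polynomial ℚ)) * (1 + X)) * h2
      have hc := congrArg (PowerSeries.coeff (R := Polynomial ℚ) (e + 1)) key
      rw [coeff_succ_X_mul, coeff_derivative] at hc
      rw [← nsmul_eq_mul, map_nsmul, nsmul_eq_mul, map_sub, add_mul, one_mul, map_add,
        coeff_succ_X_mul] at hc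
      have hne : ((e + 1 : ℕ) : Polynomial ℚ) ≠ 0 :=
        Nat.cast_ne_zero.mpr (Nat.succ_ne_zero e)
      have hkey : (PowerSeries.coeff (R := Polynomial ℚ) (e + 1)) (B ^ (e + 2))
          = (PowerSeries.coeff (R := Polynomial ℚ) e) (B ^ (e + 1)) := by
        apply mul_left_cancel₀ hne
        have hcast : ((e + 1 : ℕ) : Polynomial ℚ) = ((e : Polynomial ℚ) + 1) := by push_cast; ring
        rw [hcast] at hc ⊢
        linear_combination hc
      rw [show e + 1 + 1 = e + 2 from rfl, hkey, ih]

lemma expSeries_eq_rescale (m : ℤ) :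
    expSeries m = rescale (Polynomial.X - Polynomial.C (m : ℚ)) (exp (Polynomial ℚ)) := by
  refine PowerSeries.ext fun n => ?_
  rw [coeff_rescale, coeff_exp, expSeries, coeff_mk, Polynomial.smul_eq_C_mul,
    Polynomial.algebraMap_eq, one_div, mul_comm]

lemma rescale_neg_one :
    rescale (-1 : Polynomial ℚ) (exp (Polynomial ℚ)) = 1 - X * toddDenom := by
  refine PowerSeries.ext fun n => ?_
  rw [coeff_rescale, coeff_exp, Polynomial.algebraMap_eq]
  cases n with
  | zero =>
      simp [coeff_zero_eq_constantCoeff, map_sub, map_mul, constantCoeff_X]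
  | succ k =>
      rw [map_sub, coeff_one, coeff_succ_X_mul, toddDenom, coeff_mk, if_neg (Nat.succ_ne_zero k),
        zero_sub, ← map_neg, show ((-1 : Polynomial ℚ)) = Polynomial.C (-1 : ℚ) by simp,
        ← map_pow, ← map_mul]
      congr 1
      rw [one_div, pow_succ]
      ring

lemma exp_shift (m : ℤ) :
    expSeries m * (1 - X * toddDenom) = expSeries (m + 1) := by
  rw [← rescale_neg_one, expSeries_eq_rescale, expSeries_eq_rescale,
    exp_mul_exp_eq_exp_add,
    show (Polynomial.X - Polynomial.C (m : ℚ)) + (-1 : Polynomial ℚ)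
        = Polynomial.X - Polynomial.C (((m + 1 : ℤ)) : ℚ) by push_cast [Polynomial.C_add, Polynomial.C_1]; ring]

lemma diff_G (v : (PowerSeries (Polynomial ℚ))ˣ)
    (hv : (v : PowerSeries (Polynomial ℚ)) = toddDenom) (e : ℕ) (m : ℤ) :
    PowerSeries.coeff (R := Polynomial ℚ) (e + 1)
        (expSeries m * ((v⁻¹ : (PowerSeries (Polynomial ℚ))ˣ) : PowerSeries (Polynomial ℚ)) ^ (e + 2))
      - PowerSeries.coeff (R := Polynomial ℚ) (e + 1)
        (expSeries (m + 1) * ((v⁻¹ : (PowerSeries (Polynomial ℚ))ˣ) : PowerSeries (Polynomial ℚ)) ^ (e + 2))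
      = PowerSeries.coeff (R := Polynomial ℚ) e
        (expSeries m * ((v⁻¹ : (PowerSeries (Polynomial ℚ))ˣ) : PowerSeries (Polynomial ℚ)) ^ (e + 1)) := by
  set B : PowerSeries (Polynomial ℚ) :=
    ((v⁻¹ : (PowerSeries (Polynomial ℚ))ˣ) : PowerSeries (Polynomial ℚ)) with hBdef
  have hBQ : B * toddDenom = 1 := by rw [← hv]; exact v.inv_mul
  rw [← map_sub, ← sub_mul]
  have h1 : expSeries m - expSeries (m + 1) = expSeries m * (X * toddDenom) := by
    rw [← exp_shift]; ring
  have h3 : (expSeries m - expSeries (m + 1)) * B ^ (e + 2)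
      = X * (expSeries m * B ^ (e + 1)) := by
    rw [h1]
    linear_combination (X * expSeries m * B ^ (e + 1)) * hBQ
  rw [h3, coeff_succ_X_mul]

lemma pascal (e : ℕ) (m : ℤ) :
    (((e + 1).factorial : ℚ))⁻¹ •
        ∏ j ∈ Finset.range (e + 1), (Polynomial.X + Polynomial.C (((j : ℚ) + 1) - (m : ℚ)))
      - (((e + 1).factorial : ℚ))⁻¹ •
        ∏ j ∈ Finset.range (e + 1), (Polynomial.X + Polynomial.C (((j : ℚ) + 1) - ((m + 1 : ℤ) : ℚ)))
      = ((e.factorial : ℚ))⁻¹ •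
        ∏ j ∈ Finset.range e, (Polynomial.X + Polynomial.C (((j : ℚ) + 1) - (m : ℚ))) := by
  have h1 : ∏ j ∈ Finset.range (e + 1), (Polynomial.X + Polynomial.C (((j : ℚ) + 1) - (m : ℚ)))
      = (∏ j ∈ Finset.range e, (Polynomial.X + Polynomial.C (((j : ℚ) + 1) - (m : ℚ))))
        * (Polynomial.X + Polynomial.C (((e : ℚ) + 1) - (m : ℚ))) :=
    Finset.prod_range_succ _ _
  have h2 : ∏ j ∈ Finset.range (e + 1),
        (Polynomial.X + Polynomial.C (((j : ℚ) + 1) - ((m + 1 : ℤ) : ℚ)))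
      = (∏ j ∈ Finset.range e, (Polynomial.X + Polynomial.C (((j : ℚ) + 1) - (m : ℚ))))
        * (Polynomial.X + Polynomial.C (0 - (m : ℚ))) := by
    rw [Finset.prod_range_succ' (fun j => Polynomial.X + Polynomial.C (((j : ℚ) + 1) - ((m + 1 : ℤ) : ℚ)))]
    congr 1
    · apply Finset.prod_congr rfl
      intro j _
      congr 1
      push_cast
      ring
    · congr 1
      push_cast
      ring
  rw [h1, h2, Polynomial.smul_eq_C_mul, Polynomial.smul_eq_C_mul, Polynomial.smul_eq_C_mul]
  have hfac : Polynomial.C ((((e + 1).factorial : ℚ))⁻¹) *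
      (Polynomial.C (((e : ℚ) + 1) - (m : ℚ)) - Polynomial.C (0 - (m : ℚ)))
      = Polynomial.C (((e.factorial : ℚ))⁻¹) := by
    rw [← Polynomial.C_sub, ← Polynomial.C_mul]
    congr 1
    have h4 : ((e + 1).factorial : ℚ) = ((e : ℚ) + 1) * (e.factorial : ℚ) := by
      rw [Nat.factorial_succ]; push_cast; ring
    have h5 : ((e.factorial : ℚ)) ≠ 0 := Nat.cast_ne_zero.mpr (Nat.factorial_ne_zero _)
    have h6 : ((e : ℚ) + 1) ≠ 0 := by positivity
    rw [h4]
    field_simp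
    ring
  linear_combination (∏ j ∈ Finset.range e,
    (Polynomial.X + Polynomial.C (((j : ℚ) + 1) - (m : ℚ)))) * hfac

lemma eval_H (d : ℕ) (m : ℤ) :
    Polynomial.eval ((m : ℚ))
        (((d.factorial : ℚ))⁻¹ •
          ∏ j ∈ Finset.range d, (Polynomial.X + Polynomial.C (((j : ℚ) + 1) - (m : ℚ)))) = 1 := by
  rw [Polynomial.smul_eq_C_mul, Polynomial.eval_mul, Polynomial.eval_C, Polynomial.eval_prod]
  have h1 : ∀ j ∈ Finset.range d,
      Polynomial.eval ((m : ℚ)) (Polynomial.X + Polynomial.C (((j : ℚ) + 1) - (m : ℚ)))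
        = ((j : ℚ) + 1) := by
    intro j _
    rw [Polynomial.eval_add, Polynomial.eval_X, Polynomial.eval_C]
    ring
  rw [Finset.prod_congr rfl h1]
  have h2 : ∏ j ∈ Finset.range d, ((j : ℚ) + 1) = (d.factorial : ℚ) := by
    rw [← Finset.prod_range_add_one_eq_factorial d]
    push_cast
    rfl
  rw [h2]
  have h5 : ((d.factorial : ℚ)) ≠ 0 := Nat.cast_ne_zero.mpr (Nat.factorial_ne_zero _)
  field_simp

lemma eval_G (v : (PowerSeries (Polynomial ℚ))ˣ)
    (hv : (v : PowerSeries (Polynomial ℚ)) = toddDenom) (d : ℕ) (m : ℤ) :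
    Polynomial.eval ((m : ℚ))
      (PowerSeries.coeff (R := Polynomial ℚ) d
        (expSeries m *
          ((v⁻¹ : (PowerSeries (Polynomial ℚ))ˣ) : PowerSeries (Polynomial ℚ)) ^ (d + 1))) = 1 := by
  set B : PowerSeries (Polynomial ℚ) :=
    ((v⁻¹ : (PowerSeries (Polynomial ℚ))ˣ) : PowerSeries (Polynomial ℚ)) with hBdef
  set ψ : Polynomial ℚ →+* ℚ := Polynomial.evalRingHom ((m : ℚ)) with hψ
  have hE : PowerSeries.map ψ (expSeries m) = 1 := by
    refine PowerSeries.ext fun n => ?_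
    rw [PowerSeries.coeff_map]
    cases n with
    | zero => simp [expSeries, hψ]
    | succ k =>
        rw [coeff_one, if_neg (Nat.succ_ne_zero k)]
        simp [expSeries, hψ, Polynomial.smul_eq_C_mul]
  have step : Polynomial.eval ((m : ℚ))
      (PowerSeries.coeff (R := Polynomial ℚ) d (expSeries m * B ^ (d + 1)))
      = PowerSeries.coeff (R := ℚ) d (PowerSeries.map ψ (expSeries m * B ^ (d + 1))) := by
    rw [PowerSeries.coeff_map]
    rfl
  rw [step, map_mul, hE, one_mul, map_pow, ← map_pow, PowerSeries.coeff_map,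
    coeff_pow_inv v hv d, map_one]

lemma int_invariant {α : Sort*} (f : ℤ → α) (h : ∀ m, f m = f (m + 1)) (a b : ℤ) :
    f a = f b := by
  suffices H : ∀ c : ℤ, f c = f 0 by rw [H a, H b]
  intro c
  induction c using Int.induction_on with
  | zero => rfl
  | succ n ih => rw [← h (n : ℤ), ih]
  | pred n ih =>
      have e2 := h (-(n : ℤ) - 1)
      have e3 : (-(n : ℤ) - 1 + 1) = -(n : ℤ) := by ring
      rw [e3] at e2
      rw [e2, ih]

lemma main_aux (v : (PowerSeries (Polynomial ℚ))ˣ)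
    (hv : (v : PowerSeries (Polynomial ℚ)) = toddDenom) :
    ∀ (d : ℕ) (m : ℤ),
      PowerSeries.coeff (R := Polynomial ℚ) d
          (expSeries m *
            ((v⁻¹ : (PowerSeries (Polynomial ℚ))ˣ) : PowerSeries (Polynomial ℚ)) ^ (d + 1))
        = ((d.factorial : ℚ))⁻¹ •
            ∏ j ∈ Finset.range d, (Polynomial.X + Polynomial.C (((j : ℚ) + 1) - (m : ℚ))) := by
  intro d
  induction d with
  | zero =>
      intro m
      have hBQ : ((v⁻¹ : (PowerSeries (Polynomial ℚ))ˣ) : PowerSeries (Polynomial ℚ)) * toddDenom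
          = 1 := by rw [← hv]; exact v.inv_mul
      have hB0 : constantCoeff (R := Polynomial ℚ)
          ((v⁻¹ : (PowerSeries (Polynomial ℚ))ˣ) : PowerSeries (Polynomial ℚ)) = 1 := by
        have := congrArg (constantCoeff (R := Polynomial ℚ)) hBQ
        rw [map_mul, constCoeff_todd, mul_one, map_one] at this
        exact this
      have hE0 : constantCoeff (R := Polynomial ℚ) (expSeries m) = 1 := by
        rw [← coeff_zero_eq_constantCoeff]
        simp [expSeries]
      rw [pow_one, coeff_zero_eq_constantCoeff, map_mul, hB0, hE0, one_mul]
      simp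
  | succ e ih =>
      intro m
      set f : ℤ → Polynomial ℚ := fun m' =>
        PowerSeries.coeff (R := Polynomial ℚ) (e + 1)
            (expSeries m' *
              ((v⁻¹ : (PowerSeries (Polynomial ℚ))ˣ) : PowerSeries (Polynomial ℚ)) ^ (e + 2))
          - (((e + 1).factorial : ℚ))⁻¹ •
              ∏ j ∈ Finset.range (e + 1),
                (Polynomial.X + Polynomial.C (((j : ℚ) + 1) - (m' : ℚ))) with hf
      have hstep : ∀ m', f m' = f (m' + 1) := by
        intro m'
        have d1 := diff_G v hv e m'
        have d2 := pascal e m'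
        have hi := ih m'
        simp only [hf]
        linear_combination d1 - d2 + hi
      have hzero : ∀ m' : ℤ, Polynomial.eval ((m' : ℚ)) (f m) = 0 := by
        intro m'
        rw [int_invariant f hstep m m', hf]
        simp only
        rw [Polynomial.eval_sub, eval_G v hv (e + 1) m', eval_H (e + 1) m', sub_self]
      have hfm : f m = 0 := by
        apply Polynomial.eq_of_infinite_eval_eq
        apply Set.Infinite.mono (s := Set.range (Int.cast : ℤ → ℚ))
        · rintro x ⟨m', rfl⟩
          simp only [Set.mem_setOf_eq, Polynomial.eval_zero]
          exact hzero m'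
        · exact Set.infinite_range_of_injective Int.cast_injective
      have := sub_eq_zero.mp hfm
      exact this

end HRRAux

/-- The Hirzebruch–Riemann–Roch computation for `𝒪(-m)` on `ℙ^d`
(equation (eqCP) of Proposition 4.3.A in the case `ℳ = 𝒪(-m)`):
the coefficient of `X^d` in `e^{(t-m)X} · (X/(1 - e^{-X}))^{d+1}` is the
Hilbert polynomial `binom(t + d - m, d) = (1/d!) · ∏_{i=1}^{d} (t - m + i)`. -/
theorem hrr_twisted_sheaf (d : ℕ) (m : ℤ)
    (v : (PowerSeries (Polynomial ℚ))ˣ)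
    (hv : (v : PowerSeries (Polynomial ℚ)) = toddDenom) :
    PowerSeries.coeff (R := Polynomial ℚ) d
        (expSeries m * ((v⁻¹ : (PowerSeries (Polynomial ℚ))ˣ) : PowerSeries (Polynomial ℚ)) ^ (d + 1))
      = ((d.factorial : ℚ))⁻¹ •
          ∏ i ∈ Finset.Icc 1 d, (Polynomial.X + Polynomial.C ((i : ℚ) - (m : ℚ))) := by
  rw [HRRAux.main_aux v hv d m]
  congr 1
  induction d with
  | zero => simp
  | succ e ih =>
      rw [Finset.prod_range_succ, ih, Finset.prod_Icc_succ_top (Nat.one_le_iff_ne_zero.mpr (Nat.succ_ne_zero e))]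
      congr 2
      push_cast
      ring
end
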